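/- Let p > 3 be a prime, Π a finite projective plane of order p², and c a code word of C(Π)^⊥ of weight w(c) = 2p² − 2p + 2 + ε with 1 ≤ ε ≤ p − 2. Then there is no λ ∈ {1, ..., p−1} such that |K_λ| = |K_{p−λ}| = 2p + 1 − ε. -/

import Mathlib

open Finset
open scoped Classical
set_option linter.unusedSectionVars false
set_option maxHeartbeats 1000000

section AuxNOPM
variable {Pt Ln : Type} [Fintype Pt] [Fintype Ln]
variable {p : ℕ} {R : Pt → Ln → Prop} {c : Pt → ZMod p}

private noncomputable def AF (R : Pt → Ln → Prop) (c : Pt → ZMod p) (l : Ln) : Finset Pt :=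
  univ.filter fun x => R x l ∧ c x ≠ 0

private noncomputable def elF (R : Pt → Ln → Prop) (c : Pt → ZMod p) (P : Pt) (l : Ln) :
    Finset Pt := univ.filter fun x => R x l ∧ c x ≠ 0 ∧ x ≠ P

private noncomputable def KF (c : Pt → ZMod p) (v : ZMod p) : Finset Pt :=
  univ.filter fun x => c x = v

private noncomputable def lnsF (R : Pt → Ln → Prop) (P : Pt) : Finset Ln :=
  univ.filter fun l => R P l

private noncomputable def suppF (c : Pt → ZMod p) : Finset Pt :=
  univ.filter fun x => c x ≠ 0

private lemma aux_line_sum (hc : ∀ l : Ln, ∑ᶠ x ∈ {y : Pt | R y l}, c x = 0) (l : Ln) :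
    ∑ x ∈ AF R c l, c x = 0 := by
  have h := hc l
  have h1 : {y : Pt | R y l} = ↑(univ.filter fun y : Pt => R y l) := by ext; simp
  rw [h1, finsum_mem_coe_finset] at h
  rw [← h]
  apply Finset.sum_subset
  · intro x hx; simp only [AF, mem_filter] at hx ⊢; exact ⟨hx.1, hx.2.1⟩
  · intro x hx hnx
    simp only [AF, mem_filter, mem_univ, true_and, not_and, not_not] at hx hnx
    exact hnx hx

private lemma aux_lns_card {n : ℕ} (h : ∀ x : Pt, {l : Ln | R x l}.ncard = n + 1) (P : Pt) :
    (lnsF R P).card = n + 1 := by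
  have := h P
  rwa [Set.ncard_eq_toFinset_card', Set.toFinset_setOf] at this

private lemma aux_AF_insert (l : Ln) (P : Pt) (hPl : R P l) (hP : c P ≠ 0) :
    AF R c l = insert P (elF R c P l) := by
  ext x
  simp only [AF, elF, mem_insert, mem_filter, mem_univ, true_and]
  constructor
  · rintro ⟨h1, h2⟩
    by_cases hx : x = P
    · exact Or.inl hx
    · exact Or.inr ⟨h1, h2, hx⟩
  · rintro (rfl | ⟨h1, h2, _⟩)
    · exact ⟨hPl, hP⟩
    · exact ⟨h1, h2⟩

private lemma aux_partition (hline : ∀ x y : Pt, x ≠ y → ∃! l : Ln, R x l ∧ R y l) (P : Pt) :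
    ∑ l ∈ lnsF R P, (elF R c P l).card = ((suppF c).erase P).card := by
  rw [← Finset.card_biUnion]
  · congr 1
    ext x
    simp only [mem_biUnion, lnsF, elF, suppF, mem_erase, mem_filter, mem_univ, true_and]
    constructor
    · rintro ⟨l, hl, _, hx, hxP⟩; exact ⟨hxP, hx⟩
    · rintro ⟨hxP, hx⟩
      obtain ⟨l, ⟨hxl, hPl⟩, -⟩ := hline x P hxP
      exact ⟨l, hPl, hxl, hx, hxP⟩
  · intro l hl l' hl' hll'
    simp only [Finset.mem_coe, lnsF, mem_filter, mem_univ, true_and] at hl hl'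
    refine Finset.disjoint_left.mpr fun x hx hx' => ?_
    simp only [elF, mem_filter, mem_univ, true_and] at hx hx'
    obtain ⟨l0, -, huniq⟩ := hline x P hx.2.2
    exact hll' ((huniq l ⟨hx.1, hl⟩).trans (huniq l' ⟨hx'.1, hl'⟩).symm)

private lemma aux_el_pos (hc : ∀ l : Ln, ∑ᶠ x ∈ {y : Pt | R y l}, c x = 0)
    (l : Ln) (P : Pt) (hPl : R P l) (hP : c P ≠ 0) : (elF R c P l).Nonempty := by
  rw [Finset.nonempty_iff_ne_empty]
  intro hemp
  have hA : AF R c l = {P} := by rw [aux_AF_insert l P hPl hP, hemp]; rfl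
  have := aux_line_sum hc l
  rw [hA, Finset.sum_singleton] at this
  exact hP this

private lemma aux_el_one (hc : ∀ l : Ln, ∑ᶠ x ∈ {y : Pt | R y l}, c x = 0)
    (l : Ln) (P : Pt) (hPl : R P l) (hP : c P ≠ 0)
    {Q : Pt} (hQ : elF R c P l = {Q}) : c Q = - c P := by
  have hQP : Q ≠ P := by
    have : Q ∈ elF R c P l := by rw [hQ]; exact mem_singleton_self Q
    simp only [elF, mem_filter] at this
    exact this.2.2.2
  have := aux_line_sum hc l
  rw [aux_AF_insert l P hPl hP, hQ, Finset.sum_insert (by simp [hQP.symm]),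
    Finset.sum_singleton] at this
  linear_combination this

private lemma aux_t_le (hc : ∀ l : Ln, ∑ᶠ x ∈ {y : Pt | R y l}, c x = 0)
    (hline : ∀ x y : Pt, x ≠ y → ∃! l : Ln, R x l ∧ R y l) (P : Pt) (hP : c P ≠ 0) :
    ((lnsF R P).filter fun l => (elF R c P l).card = 1).card ≤ (KF c (-(c P))).card := by
  set f : Ln → Pt := fun l =>
    if h : (elF R c P l).card = 1 then (Finset.card_eq_one.mp h).choose else P with hf
  have hkey : ∀ l ∈ (lnsF R P).filter fun l => (elF R c P l).card = 1,
      elF R c P l = {f l} := by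
    intro l hl
    simp only [mem_filter] at hl
    rw [hf]; simp only [hl.2, dif_pos]
    exact (Finset.card_eq_one.mp hl.2).choose_spec
  apply Finset.card_le_card_of_injOn f
  · intro l hl
    have h2 := hkey l hl
    simp only [Finset.mem_coe, mem_filter, lnsF, mem_univ, true_and] at hl
    have := aux_el_one hc l P hl.1 hP h2
    simp only [Finset.mem_coe, KF, mem_filter, mem_univ, true_and]
    exact this
  · intro l hl l' hl' heq
    have h2 := hkey l hl
    have h2' := hkey l' hl'
    have hm : f l ∈ elF R c P l := by rw [h2]; exact mem_singleton_self _
    have hm' : f l ∈ elF R c P l' := by rw [h2', ← heq]; exact mem_singleton_self _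
    simp only [elF, mem_filter, mem_univ, true_and] at hm hm'
    simp only [coe_filter, Set.mem_setOf_eq, mem_filter, lnsF, mem_univ, true_and] at hl hl'
    obtain ⟨l0, -, huniq⟩ := hline (f l) P hm.2.2
    exact (huniq l ⟨hm.1, hl.1⟩).trans (huniq l' ⟨hm'.1, hl'.1⟩).symm

-- L7 : 2(n+1) ≤ (w-1) + t

private lemma aux_two_le {n : ℕ} (hc : ∀ l : Ln, ∑ᶠ x ∈ {y : Pt | R y l}, c x = 0)
    (hline : ∀ x y : Pt, x ≠ y → ∃! l : Ln, R x l ∧ R y l)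
    (hlns : ∀ x : Pt, {l : Ln | R x l}.ncard = n + 1) (P : Pt) (hP : c P ≠ 0) :
    2 * (n + 1) ≤ ((suppF c).erase P).card
      + ((lnsF R P).filter fun l => (elF R c P l).card = 1).card := by
  rw [← aux_partition hline P, Finset.card_filter]
  have h1 : 2 * (n + 1) = ∑ _l ∈ lnsF R P, 2 := by
    rw [Finset.sum_const, aux_lns_card hlns P, smul_eq_mul, mul_comm]
  rw [h1, ← Finset.sum_add_distrib]
  apply Finset.sum_le_sum
  intro l hl
  simp only [lnsF, mem_filter, mem_univ, true_and] at hl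
  have hpos := aux_el_pos hc l P hl hP
  rw [← Finset.card_pos] at hpos
  by_cases h : (elF R c P l).card = 1
  · simp [h]
  · simp only [h, if_false, add_zero]
    omega

private lemma aux_le_two {n m : ℕ} (hc : ∀ l : Ln, ∑ᶠ x ∈ {y : Pt | R y l}, c x = 0)
    (hline : ∀ x y : Pt, x ≠ y → ∃! l : Ln, R x l ∧ R y l)
    (hlns : ∀ x : Pt, {l : Ln | R x l}.ncard = n + 1)
    (Q : Pt) (hQ : c Q ≠ 0)
    (hK : (KF c (-(c Q))).card ≤ m)
    (hnum : ((suppF c).erase Q).card + m ≤ 2 * (n + 1))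
    (l : Ln) (hQl : R Q l) :
    (elF R c Q l).card ≤ 2 := by
  have hlmem : l ∈ lnsF R Q := by simp [lnsF, hQl]
  have hsum : (elF R c Q l).card + ∑ l' ∈ (lnsF R Q).erase l, (elF R c Q l').card
      = ((suppF c).erase Q).card := by
    rw [← aux_partition hline Q]
    exact Finset.add_sum_erase _ (fun l' => (elF R c Q l').card) hlmem
  have hlow : ∑ l' ∈ (lnsF R Q).erase l, (2 : ℕ) ≤
      ∑ l' ∈ (lnsF R Q).erase l,
        ((elF R c Q l').card + (if (elF R c Q l').card = 1 then 1 else 0)) := by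
    apply Finset.sum_le_sum
    intro l' hl'
    have hl'2 := Finset.mem_of_mem_erase hl'
    simp only [lnsF, mem_filter, mem_univ, true_and] at hl'2
    have hpos := aux_el_pos hc l' Q hl'2 hQ
    rw [← Finset.card_pos] at hpos
    by_cases h : (elF R c Q l').card = 1
    · simp [h]
    · simp only [h, if_false, add_zero]; omega
  rw [Finset.sum_const, smul_eq_mul, Finset.sum_add_distrib] at hlow
  have hcard_erase : ((lnsF R Q).erase l).card = n := by
    rw [Finset.card_erase_of_mem hlmem, aux_lns_card hlns Q]
    omega
  have hite : ∑ l' ∈ (lnsF R Q).erase l, (if (elF R c Q l').card = 1 then 1 else 0)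
      ≤ (KF c (-(c Q))).card := by
    calc ∑ l' ∈ (lnsF R Q).erase l, (if (elF R c Q l').card = 1 then (1:ℕ) else 0)
        ≤ ∑ l' ∈ lnsF R Q, (if (elF R c Q l').card = 1 then 1 else 0) :=
          Finset.sum_le_sum_of_subset (Finset.erase_subset _ _)
      _ = ((lnsF R Q).filter fun l' => (elF R c Q l').card = 1).card :=
          (Finset.card_filter _ _).symm
      _ ≤ _ := aux_t_le hc hline Q hQ
  omega

private lemma aux_three {n m : ℕ} (hc : ∀ l : Ln, ∑ᶠ x ∈ {y : Pt | R y l}, c x = 0)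
    (hline : ∀ x y : Pt, x ≠ y → ∃! l : Ln, R x l ∧ R y l)
    (hlns : ∀ x : Pt, {l : Ln | R x l}.ncard = n + 1)
    (Q : Pt) (hQ : c Q ≠ 0)
    (hK : (KF c (-(c Q))).card ≤ m)
    (hnum : ((suppF c).erase Q).card + m ≤ 2 * (n + 1))
    (l : Ln) (hQl : R Q l)
    (x0 : Pt) (hx0 : x0 ∈ elF R c Q l) (hx0v : c x0 ≠ - c Q) :
    ∃ y, AF R c l = {Q, x0, y} ∧ c Q + c x0 + c y = 0 ∧ y ≠ Q ∧ y ≠ x0 ∧ R y l := by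
  have hle2 := aux_le_two hc hline hlns Q hQ hK hnum l hQl
  have hx0' := hx0
  simp only [elF, mem_filter, mem_univ, true_and] at hx0'
  have hcard : (elF R c Q l).card = 2 := by
    have h1 : 1 ≤ (elF R c Q l).card := Finset.card_pos.mpr ⟨x0, hx0⟩
    rcases Nat.lt_or_ge (elF R c Q l).card 2 with h | h
    · exfalso
      have hone : (elF R c Q l).card = 1 := by omega
      obtain ⟨z, hz⟩ := Finset.card_eq_one.mp hone
      have : x0 = z := by rw [hz] at hx0; exact Finset.mem_singleton.mp hx0
      subst this
      exact hx0v (aux_el_one hc l Q hQl hQ hz)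
    · omega
  have herase : ((elF R c Q l).erase x0).card = 1 := by
    rw [Finset.card_erase_of_mem hx0, hcard]
  obtain ⟨y, hy⟩ := Finset.card_eq_one.mp herase
  have hymem : y ∈ (elF R c Q l).erase x0 := by rw [hy]; exact mem_singleton_self _
  have hyx0 : y ≠ x0 := Finset.ne_of_mem_erase hymem
  have hyel := Finset.mem_of_mem_erase hymem
  have hyel' := hyel
  simp only [elF, mem_filter, mem_univ, true_and] at hyel'
  have hel : elF R c Q l = {x0, y} := by
    rw [← Finset.insert_erase hx0, hy]
  have hAF : AF R c l = {Q, x0, y} := by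
    rw [aux_AF_insert l Q hQl hQ, hel]
  refine ⟨y, hAF, ?_, hyel'.2.2, hyx0, hyel'.1⟩
  have hsum := aux_line_sum hc l
  rw [hAF] at hsum
  have hQx0 : Q ≠ x0 := fun h => hx0'.2.2 h.symm
  have hQy : Q ≠ y := fun h => hyel'.2.2 h.symm
  have hni1 : Q ∉ ({x0, y} : Finset Pt) := by simp [hQx0, hQy]
  have hni2 : x0 ∉ ({y} : Finset Pt) := by simp [hyx0.symm]
  rw [Finset.sum_insert hni1, Finset.sum_insert hni2, Finset.sum_singleton] at hsum
  linear_combination hsum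

private lemma aux_main {n m w : ℕ} (hc : ∀ l : Ln, ∑ᶠ x ∈ {y : Pt | R y l}, c x = 0)
    (hline : ∀ x y : Pt, x ≠ y → ∃! l : Ln, R x l ∧ R y l)
    (hlns : ∀ x : Pt, {l : Ln | R x l}.ncard = n + 1)
    (a : ZMod p) (ha : a ≠ 0) (ha2 : a + a ≠ 0) (ha3 : a + a + a ≠ 0)
    (hsupp : (suppF c).card = w)
    (hnum : w + m = 2 * (n + 1) + 1)
    (hm2 : 2 ≤ m)
    (hKa : (KF c a).card = m) (hKna : (KF c (-a)).card = m) :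
    (KF c (a + a)).card + 1 = m := by
  have hna0 : (-a : ZMod p) ≠ 0 := neg_ne_zero.mpr ha
  have haa_ne_na : (a + a : ZMod p) ≠ -a := fun h => ha3 (by linear_combination h)
  have haa_ne_a : (a + a : ZMod p) ≠ a := fun h => ha (by linear_combination h)
  -- numeric facts per support point
  have herase : ∀ Q : Pt, c Q ≠ 0 → ((suppF c).erase Q).card + m ≤ 2 * (n + 1) := by
    intro Q hQ
    have hQs : Q ∈ suppF c := by simp [suppF, hQ]
    have hpos : 1 ≤ (suppF c).card := Finset.card_pos.mpr ⟨Q, hQs⟩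
    rw [Finset.card_erase_of_mem hQs, hsupp]
    omega
  -- key construction: third point on the line of two K₋ₐ points
  have key : ∀ Q Q' : Pt, c Q = -a → c Q' = -a → Q ≠ Q' →
      ∃ y l, R Q l ∧ R Q' l ∧ AF R c l = {Q, Q', y} ∧ c y = a + a ∧ y ≠ Q ∧ y ≠ Q' := by
    intro Q Q' hQv hQ'v hne
    obtain ⟨l, ⟨hQl, hQ'l⟩, -⟩ := hline Q Q' hne
    have hQ0 : c Q ≠ 0 := by rw [hQv]; exact hna0
    have hK' : (KF c (-(c Q))).card ≤ m := by rw [hQv, neg_neg, hKa]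
    have hx0 : Q' ∈ elF R c Q l := by
      simp only [elF, mem_filter, mem_univ, true_and]
      exact ⟨hQ'l, by rw [hQ'v]; exact hna0, hne.symm⟩
    have hx0v : c Q' ≠ - c Q := by
      rw [hQ'v, hQv, neg_neg]
      intro h; exact ha2 (by linear_combination -h)
    obtain ⟨y, hAF, hsum, hyQ, hyQ', hyl⟩ :=
      aux_three hc hline hlns Q hQ0 hK' (herase Q hQ0) l hQl Q' hx0 hx0v
    refine ⟨y, l, hQl, hQ'l, hAF, ?_, hyQ, hyQ'⟩
    rw [hQv, hQ'v] at hsum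
    linear_combination hsum
  choose! g gl hg1 hg2 hg3 hg4 hg5 hg6 using key
  -- the fiberwise count
  set T := (KF c (-a)).offDiag with hT
  have hmemT : ∀ qq ∈ T, c qq.1 = -a ∧ c qq.2 = -a ∧ qq.1 ≠ qq.2 := by
    intro qq hqq
    rw [hT, Finset.mem_offDiag] at hqq
    simp only [KF, mem_filter, mem_univ, true_and] at hqq
    exact ⟨hqq.1, hqq.2.1, hqq.2.2⟩
  have hmaps : ∀ qq ∈ T, g qq.1 qq.2 ∈ KF c (a + a) := by
    intro qq hqq
    obtain ⟨h1, h2, h3⟩ := hmemT qq hqq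
    simp only [KF, mem_filter, mem_univ, true_and]
    exact hg4 qq.1 qq.2 h1 h2 h3
  have hcount := Finset.card_eq_sum_card_fiberwise hmaps
  have hfiber : ∀ X ∈ KF c (a + a),
      (T.filter fun qq => g qq.1 qq.2 = X).card = m := by
    intro X hX
    simp only [KF, mem_filter, mem_univ, true_and] at hX
    have hXQ : ∀ Q : Pt, c Q = -a → X ≠ Q := by
      intro Q hQv h; rw [← h, hX] at hQv; exact haa_ne_na hQv
    rw [← hKna]
    apply Finset.card_bij (fun qq _ => qq.1)
    · intro qq hqq
      have := (hmemT qq (Finset.mem_of_mem_filter qq hqq)).1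
      simp only [KF, mem_filter, mem_univ, true_and]
      exact this
    · -- injectivity
      intro qq hqq rr hrr heq
      rw [Finset.mem_filter] at hqq hrr
      obtain ⟨hq1, hq2, hq3⟩ := hmemT qq hqq.1
      obtain ⟨hr1, hr2, hr3⟩ := hmemT rr hrr.1
      have hQl1 := hg1 qq.1 qq.2 hq1 hq2 hq3
      have hQ'l1 := hg2 qq.1 qq.2 hq1 hq2 hq3
      have hAF1 := hg3 qq.1 qq.2 hq1 hq2 hq3
      have hQl2 := hg1 rr.1 rr.2 hr1 hr2 hr3
      have hQ'l2 := hg2 rr.1 rr.2 hr1 hr2 hr3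
      have hAF2 := hg3 rr.1 rr.2 hr1 hr2 hr3
      rw [hqq.2] at hAF1
      rw [hrr.2] at hAF2
      -- X is on both lines
      have hXl1 : R X (gl qq.1 qq.2 hq1 hq2 hq3) := by
        have hXm : X ∈ AF R c (gl qq.1 qq.2 hq1 hq2 hq3) := by rw [hAF1]; simp
        simp only [AF, mem_filter, mem_univ, true_and] at hXm
        exact hXm.1
      have hXl2 : R X (gl rr.1 rr.2 hr1 hr2 hr3) := by
        have hXm : X ∈ AF R c (gl rr.1 rr.2 hr1 hr2 hr3) := by rw [hAF2]; simp
        simp only [AF, mem_filter, mem_univ, true_and] at hXm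
        exact hXm.1
      have hq1X : qq.1 ≠ X := (hXQ qq.1 hq1).symm
      obtain ⟨l0, -, hu⟩ := hline qq.1 X hq1X
      have hll : gl qq.1 qq.2 hq1 hq2 hq3 = gl rr.1 rr.2 hr1 hr2 hr3 := by
        have e1 := hu _ ⟨hQl1, hXl1⟩
        have e2 := hu _ ⟨by rw [heq]; exact hQl2, hXl2⟩
        rw [e1, e2]
      rw [hll, hAF2] at hAF1
      have hmem2 : qq.2 ∈ ({rr.1, rr.2, X} : Finset Pt) := by
        rw [hAF1]; simp
      simp only [mem_insert, mem_singleton] at hmem2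
      have hq2X : qq.2 ≠ X := fun h => haa_ne_na (by rw [← hX, ← h]; exact hq2)
      have hq2r1 : qq.2 ≠ rr.1 := by rw [← heq]; exact hq3.symm
      have : qq.2 = rr.2 := by tauto
      exact Prod.ext heq this
    · -- surjectivity
      intro Q hQmem
      simp only [KF, mem_filter, mem_univ, true_and] at hQmem
      have hQX : Q ≠ X := (hXQ Q hQmem).symm
      obtain ⟨l, ⟨hQl, hXl⟩, -⟩ := hline Q X hQX
      have hQ0 : c Q ≠ 0 := by rw [hQmem]; exact hna0
      have hK' : (KF c (-(c Q))).card ≤ m := by rw [hQmem, neg_neg, hKa]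
      have hx0 : X ∈ elF R c Q l := by
        simp only [elF, mem_filter, mem_univ, true_and]
        exact ⟨hXl, by rw [hX]; exact ha2, hQX.symm⟩
      have hx0v : c X ≠ - c Q := by rw [hX, hQmem, neg_neg]; exact haa_ne_a
      obtain ⟨y, hAF, hsum, hyQ, hyX, hyl⟩ :=
        aux_three hc hline hlns Q hQ0 hK' (herase Q hQ0) l hQl X hx0 hx0v
      have hyv : c y = -a := by
        rw [hQmem, hX] at hsum
        linear_combination hsum
      have hQy : Q ≠ y := Ne.symm hyQ
      refine ⟨(Q, y), ?_, rfl⟩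
      have hTmem : (Q, y) ∈ T := by
        rw [hT, Finset.mem_offDiag]
        refine ⟨?_, ?_, hQy⟩ <;> simp [KF, hQmem, hyv]
      rw [Finset.mem_filter]
      refine ⟨hTmem, ?_⟩
      -- show g Q y = X
      have hgl1 := hg1 Q y hQmem hyv hQy
      have hgl2 := hg2 Q y hQmem hyv hQy
      have hgl3 := hg3 Q y hQmem hyv hQy
      have hg5' := hg5 Q y hQmem hyv hQy
      have hg6' := hg6 Q y hQmem hyv hQy
      obtain ⟨l0, -, hu⟩ := hline Q y hQy
      have hll : gl Q y hQmem hyv hQy = l := by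
        have e1 := hu _ ⟨hgl1, hgl2⟩
        have e2 := hu _ ⟨hQl, hyl⟩
        rw [e1, e2]
      rw [hll, hAF] at hgl3
      have hmem2 : g Q y ∈ ({Q, X, y} : Finset Pt) := by
        rw [hgl3]; simp
      simp only [mem_insert, mem_singleton] at hmem2
      tauto
  -- assemble the count
  rw [Finset.sum_congr rfl hfiber, Finset.sum_const, smul_eq_mul] at hcount
  have hTcard : T.card = m * m - m := by
    rw [hT, Finset.offDiag_card, hKna]
  have hmul : (KF c (a + a)).card * m = (m - 1) * m := by
    rw [Nat.sub_mul, one_mul, ← hTcard, hcount]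
  have := Nat.eq_of_mul_eq_mul_right (show 0 < m by omega) hmul
  omega

private lemma aux_KA {n : ℕ} (hc : ∀ l : Ln, ∑ᶠ x ∈ {y : Pt | R y l}, c x = 0)
    (hline : ∀ x y : Pt, x ≠ y → ∃! l : Ln, R x l ∧ R y l)
    (hlns : ∀ x : Pt, {l : Ln | R x l}.ncard = n + 1) (P : Pt) (hP : c P ≠ 0) :
    2 * (n + 1) ≤ ((suppF c).erase P).card + (KF c (-(c P))).card :=
  le_trans (aux_two_le hc hline hlns P hP)
    (Nat.add_le_add_left (aux_t_le hc hline P hP) _)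

private lemma aux_ncard_eq (q : Pt → Prop) :
    {x | q x}.ncard = (univ.filter q).card := by
  rw [← Set.ncard_coe_finset (univ.filter q)]
  congr 1
  ext x; simp

end AuxNOPM

/-- A projective plane of order `n`, given by an abstract incidence relation `R`. -/
structure IsProjectivePlaneOrder {P L : Type*} (n : ℕ) (R : P → L → Prop) : Prop where
  existsUnique_line : ∀ x y : P, x ≠ y → ∃! l : L, R x l ∧ R y l
  existsUnique_point : ∀ l m : L, l ≠ m → ∃! x : P, R x l ∧ R x m
  quadrangle : ∃ a b c d : P, a ≠ b ∧ a ≠ c ∧ a ≠ d ∧ b ≠ c ∧ b ≠ d ∧ c ≠ d ∧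
    ∀ l : L, ¬(R a l ∧ R b l ∧ R c l) ∧ ¬(R a l ∧ R b l ∧ R d l) ∧
      ¬(R a l ∧ R c l ∧ R d l) ∧ ¬(R b l ∧ R c l ∧ R d l)
  line_card : ∀ l : L, {x | R x l}.ncard = n + 1
  point_card : ∀ x : P, {l | R x l}.ncard = n + 1

/-- A code word of the dual code `C(Π)^⊥`: a function from points to `F_p` summing
to zero on every line. -/
def IsDualCodeWord {P L : Type*} (p : ℕ) (R : P → L → Prop) (c : P → ZMod p) : Prop :=
  ∀ l : L, ∑ᶠ x ∈ {y : P | R y l}, c x = 0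

/-- For `p > 3` there is no colour `λ` with `|K_λ| = |K_{p-λ}| = 2p + 1 - ε`. -/
theorem no_opposite_pair_minimal {Pt Ln : Type} [Finite Pt] [Finite Ln]
    (p : ℕ) (hp : p.Prime) (hp3 : 3 < p)
    (R : Pt → Ln → Prop) (hPP : IsProjectivePlaneOrder (p ^ 2) R)
    (c : Pt → ZMod p) (hc : IsDualCodeWord p R c)
    (ε : ℕ) (hε1 : 1 ≤ ε) (hε2 : ε ≤ p - 2)
    (hw : (Function.support c).ncard = 2 * p ^ 2 - 2 * p + 2 + ε) :
    ∀ a : ZMod p, a ≠ 0 →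
      ¬(({x | c x = a} : Set Pt).ncard = 2 * p + 1 - ε ∧
        ({x | c x = -a} : Set Pt).ncard = 2 * p + 1 - ε) := by
    classical
  cases nonempty_fintype Pt
  cases nonempty_fintype Ln
  haveI : Fact p.Prime := ⟨hp⟩
  rintro a ha ⟨hKa, hKna⟩
  have hc' : ∀ l : Ln, ∑ᶠ x ∈ {y : Pt | R y l}, c x = 0 := hc
  have hline := hPP.existsUnique_line
  -- field facts
  have hcast : ∀ k : ℕ, 0 < k → k < p → ((k : ℕ) : ZMod p) ≠ 0 := by
    intro k hk hkp h
    rw [ZMod.natCast_eq_zero_iff] at h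
    have := Nat.le_of_dvd hk h
    omega
  have ha2 : a + a ≠ 0 := by
    intro h
    have h' : ((2 : ℕ) : ZMod p) * a = 0 := by push_cast; linear_combination h
    rcases mul_eq_zero.mp h' with h'' | h''
    · exact hcast 2 (by norm_num) (by omega) h''
    · exact ha h''
  have ha3 : a + a + a ≠ 0 := by
    intro h
    have h' : ((3 : ℕ) : ZMod p) * a = 0 := by push_cast; linear_combination h
    rcases mul_eq_zero.mp h' with h'' | h''
    · exact hcast 3 (by norm_num) (by omega) h''
    · exact ha h''
  -- numbers
  have hpn : p ≤ p ^ 2 := Nat.le_self_pow two_ne_zero p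
  obtain ⟨n, hn, hpn⟩ : ∃ n : ℕ, n = p ^ 2 ∧ p ≤ n := ⟨p ^ 2, rfl, hpn⟩
  rw [← hn] at hPP hw
  have hlns := hPP.point_card
  set m := 2 * p + 1 - ε with hm
  set w := 2 * n - 2 * p + 2 + ε with hwdef
  -- convert ncard hypotheses
  have hsupp : (suppF c).card = w := by
    rw [← hw, ← Set.ncard_coe_finset (suppF c)]
    congr 1
    ext x
    simp [suppF, Function.mem_support]
  have hKa' : (KF c a).card = m := by
    rw [← hKa, ← Set.ncard_coe_finset (KF c a)]
    congr 1
    ext x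
    simp [KF]
  have hKna' : (KF c (-a)).card = m := by
    rw [← hKna, ← Set.ncard_coe_finset (KF c (-a))]
    congr 1
    ext x
    simp [KF]
  have hnum : w + m = 2 * (n + 1) + 1 := by omega
  have hm2 : 2 ≤ m := by omega
  -- first application : |K_{2a}| = m - 1
  have hmain1 := aux_main hc' hline hlns a ha ha2 ha3 hsupp hnum hm2 hKa' hKna'
  -- second application with -a : |K_{-2a}| = m - 1
  have hna : (-a : ZMod p) ≠ 0 := neg_ne_zero.mpr ha
  have hna2 : (-a : ZMod p) + (-a) ≠ 0 := by
    intro h; exact ha2 (by linear_combination -h)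
  have hna3 : (-a : ZMod p) + (-a) + (-a) ≠ 0 := by
    intro h; exact ha3 (by linear_combination -h)
  have hKa'' : (KF c (-(-a))).card = m := by rw [neg_neg]; exact hKa'
  have hmain2 := aux_main hc' hline hlns (-a) hna hna2 hna3 hsupp hnum hm2 hKna' hKa''
  rw [← neg_add] at hmain2
  -- pick a point X with c X = a + a
  have hXex : (KF c (a + a)).Nonempty := Finset.card_pos.mp (by omega)
  obtain ⟨X, hXmem⟩ := hXex
  have hXv : c X = a + a := by
    simpa [KF] using hXmem
  have hX0 : c X ≠ 0 := by rw [hXv]; exact ha2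
  -- Lemma A at X forces |K_{-2a}| ≥ m, contradiction
  have hKA := aux_KA hc' hline hlns X hX0
  rw [hXv] at hKA
  have hXs : X ∈ suppF c := by simp [suppF, hX0]
  rw [Finset.card_erase_of_mem hXs, hsupp] at hKA
  have htle := aux_t_le hc' hline X hX0
  omega
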